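/- (Singular criterion) Let p^[π] ∈ I^[Σ] and let G^[Σ] be a labelled Gröbner basis of I^[Σ] up to signature s(π). If there exists a regular s-reduced element g^[γ] ∈ G^[Σ] with s(γ) = s(π), then p^[π] regular s-reduces to a normal form that is singular top s-reducible by G^[Σ]. -/

import Mathlib

open Finsupp

/-- The free algebra `K⟨X⟩`, realized as the monoid algebra of the free monoid. -/
abbrev FreeAlg (K X : Type*) [Field K] := MonoidAlgebra K (FreeMonoid X)

/-- Module monomials `a εᵢ b` of the free bimodule of rank `r`. -/
structure MonMod (X : Type*) (r : ℕ) where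
  left : FreeMonoid X
  idx : Fin r
  right : FreeMonoid X

/-- The free bimodule `Σ = (K⟨X⟩ ⊗ K⟨X⟩)^r`, realized as the span of module monomials. -/
abbrev FreeBimod (K X : Type*) [Field K] (r : ℕ) := MonMod X r →₀ K

/-- Two-sided action of a pair of words on a module monomial: `a·(c εᵢ d)·b = (ac) εᵢ (db)`. -/
def act {X : Type*} {r : ℕ} (a b : FreeMonoid X) (μ : MonMod X r) : MonMod X r :=
  ⟨a * μ.left, μ.idx, μ.right * b⟩

/-- The monomial `w` as an element of the free algebra. -/
noncomputable def mon (K : Type*) [Field K] {X : Type*} (w : FreeMonoid X) : FreeAlg K X :=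
  MonoidAlgebra.of K (FreeMonoid X) w

/-- The evaluation homomorphism `Σ → K⟨X⟩`, `εᵢ ↦ fᵢ`. -/
noncomputable def evalS {K X : Type*} [Field K] {r : ℕ} (F : Fin r → FreeAlg K X)
    (α : FreeBimod K X r) : FreeAlg K X :=
  α.sum fun μ c => c • (mon K μ.left * F μ.idx * mon K μ.right)

section Orders

variable {K X : Type*} [Field K] [LinearOrder (FreeMonoid X)] {r : ℕ}
  [LinearOrder (MonMod X r)]

/-- The signature of a module element: the largest module monomial of its support
(`⊥` for the zero element). -/
noncomputable def sigW (α : FreeBimod K X r) : WithBot (MonMod X r) := α.support.max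

/-- The leading monomial of a nonzero polynomial (junk value `1` for `0`). -/
noncomputable def lmon (p : FreeAlg K X) : FreeMonoid X :=
  if h : p.coeff.support.Nonempty then p.coeff.support.max' h else 1

/-- The leading coefficient. -/
noncomputable def lcoeff (p : FreeAlg K X) : K := p.coeff (lmon p)

/-- The leading term. -/
noncomputable def lterm (p : FreeAlg K X) : FreeAlg K X :=
  MonoidAlgebra.single (lmon p) (lcoeff p)

/-- `f^[α]` is top s-reducible by the set `G^[Σ]`. -/
def TopSRed (G : Set (FreeAlg K X × FreeBimod K X r)) (f : FreeAlg K X)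
    (α : FreeBimod K X r) : Prop :=
  ∃ g γ, (g, γ) ∈ G ∧ g ≠ 0 ∧ ∃ a b : FreeMonoid X,
    a * lmon g * b = lmon f ∧ WithBot.map (act a b) (sigW γ) ≤ sigW α

/-- `f^[α]` is singular top s-reducible by `G^[Σ]`. -/
def SingTopSRed (G : Set (FreeAlg K X × FreeBimod K X r)) (f : FreeAlg K X)
    (α : FreeBimod K X r) : Prop :=
  f ≠ 0 ∧ ∃ g γ, (g, γ) ∈ G ∧ g ≠ 0 ∧ ∃ a b : FreeMonoid X,
    a * lmon g * b = lmon f ∧ WithBot.map (act a b) (sigW γ) = sigW α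

/-- `f^[α]` admits a regular s-reduction by `G^[Σ]`. -/
def RegSRedible (G : Set (FreeAlg K X × FreeBimod K X r)) (f : FreeAlg K X)
    (α : FreeBimod K X r) : Prop :=
  ∃ g γ, (g, γ) ∈ G ∧ g ≠ 0 ∧ ∃ a b : FreeMonoid X,
    a * lmon g * b ∈ f.coeff.support ∧ WithBot.map (act a b) (sigW γ) < sigW α

/-- `f^[α]` admits a regular *top* s-reduction by `G^[Σ]`. -/
def RegTopSRedible (G : Set (FreeAlg K X × FreeBimod K X r)) (f : FreeAlg K X)
    (α : FreeBimod K X r) : Prop :=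
  f ≠ 0 ∧ ∃ g γ, (g, γ) ∈ G ∧ g ≠ 0 ∧ ∃ a b : FreeMonoid X,
    a * lmon g * b = lmon f ∧ WithBot.map (act a b) (sigW γ) < sigW α

/-- Result of one s-reduction step of `f^[α]` by `a g^[γ] b`. -/
noncomputable def sredResult (f : FreeAlg K X) (α : FreeBimod K X r)
    (g : FreeAlg K X) (γ : FreeBimod K X r) (a b : FreeMonoid X) :
    FreeAlg K X × FreeBimod K X r :=
  (f - (f.coeff (a * lmon g * b) * (lcoeff g)⁻¹) • (mon K a * g * mon K b),
   α - (f.coeff (a * lmon g * b) * (lcoeff g)⁻¹) • Finsupp.mapDomain (act a b) γ)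

/-- One s-reduction step by `G^[Σ]`. -/
def SRedStep (G : Set (FreeAlg K X × FreeBimod K X r))
    (p q : FreeAlg K X × FreeBimod K X r) : Prop :=
  ∃ g γ, (g, γ) ∈ G ∧ g ≠ 0 ∧ ∃ a b : FreeMonoid X,
    a * lmon g * b ∈ p.1.coeff.support ∧ WithBot.map (act a b) (sigW γ) ≤ sigW p.2 ∧
    q = sredResult p.1 p.2 g γ a b

/-- One *regular* s-reduction step by `G^[Σ]`. -/
def RegSRedStep (G : Set (FreeAlg K X × FreeBimod K X r))
    (p q : FreeAlg K X × FreeBimod K X r) : Prop :=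
  ∃ g γ, (g, γ) ∈ G ∧ g ≠ 0 ∧ ∃ a b : FreeMonoid X,
    a * lmon g * b ∈ p.1.coeff.support ∧ WithBot.map (act a b) (sigW γ) < sigW p.2 ∧
    q = sredResult p.1 p.2 g γ a b

/-- `p` s-reduces to zero by `G^[Σ]`. -/
def SRedToZero (G : Set (FreeAlg K X × FreeBimod K X r))
    (p : FreeAlg K X × FreeBimod K X r) : Prop :=
  ∃ σ : FreeBimod K X r, Relation.ReflTransGen (SRedStep G) p (0, σ)

/-- `p` regular s-reduces to zero by `G^[Σ]`. -/
def RegSRedToZero (G : Set (FreeAlg K X × FreeBimod K X r))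
    (p : FreeAlg K X × FreeBimod K X r) : Prop :=
  ∃ σ : FreeBimod K X r, Relation.ReflTransGen (RegSRedStep G) p (0, σ)

/-- `G^[Σ] ⊆ I^[Σ]`: labelled polynomials with nonzero polynomial part. -/
def InLab (F : Fin r → FreeAlg K X) (G : Set (FreeAlg K X × FreeBimod K X r)) : Prop :=
  ∀ p ∈ G, p.1 = evalS F p.2 ∧ p.1 ≠ 0

/-- `G^[Σ]` is a labelled Gröbner basis of `I^[Σ]`. -/
def LabGB (F : Fin r → FreeAlg K X) (G : Set (FreeAlg K X × FreeBimod K X r)) : Prop :=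
  InLab F G ∧ ∀ (f : FreeAlg K X) (α : FreeBimod K X r), f = evalS F α → SRedToZero G (f, α)

/-- `G^[Σ]` is a labelled Gröbner basis of `I^[Σ]` up to signature `σ`. -/
def LabGBUpTo (F : Fin r → FreeAlg K X) (G : Set (FreeAlg K X × FreeBimod K X r))
    (σ : MonMod X r) : Prop :=
  InLab F G ∧ ∀ (f : FreeAlg K X) (α : FreeBimod K X r), f = evalS F α →
    sigW α < (σ : WithBot (MonMod X r)) → SRedToZero G (f, α)

/-- `G^[Σ]` is a *minimal* labelled Gröbner basis of `I^[Σ]`. -/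
def MinLabGB (F : Fin r → FreeAlg K X) (G : Set (FreeAlg K X × FreeBimod K X r)) : Prop :=
  LabGB F G ∧ ∀ p ∈ G, ¬ TopSRed (G \ {p}) p.1 p.2

end Orders

section Helpers
set_option linter.unusedSectionVars false

lemma max_lt'' {α : Type*} [LinearOrder α] (s : Finset α) (a : α)
    (h : ∀ b ∈ s, b < a) : s.max < (a : WithBot α) := by
  cases hm : s.max with
  | bot => exact WithBot.bot_lt_coe a
  | coe b => exact_mod_cast h b (Finset.mem_of_max hm)

lemma max_eq'' {α : Type*} [LinearOrder α] (s : Finset α) (a : α)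
    (h1 : a ∈ s) (h2 : ∀ b ∈ s, b ≤ a) : s.max = (a : WithBot α) :=
  le_antisymm (Finset.max_le (by exact_mod_cast h2)) (Finset.le_max h1)

variable {K X : Type*} [Field K] {r : ℕ}

lemma conj_inj (a b : FreeMonoid X) : Function.Injective (fun u : FreeMonoid X => a * u * b) := by
  intro u v h
  simp only at h
  exact mul_left_cancel (mul_right_cancel h)

lemma conj_eq_mapDomain (a b : FreeMonoid X) (g : FreeAlg K X) :
    (mon K a * g * mon K b).coeff = Finsupp.mapDomain (fun u => a * u * b) g.coeff := by
  induction g using MonoidAlgebra.induction with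
  | zero => simp [Finsupp.mapDomain_zero]
  | single_add w c f hw hc ih =>
      rw [mul_add, add_mul, MonoidAlgebra.coeff_add, MonoidAlgebra.coeff_add,
        Finsupp.mapDomain_add, ih]
      congr 1
      rw [MonoidAlgebra.coeff_single, Finsupp.mapDomain_single]
      simp [mon, MonoidAlgebra.of_apply, MonoidAlgebra.single_mul_single]

lemma conj_apply (a b : FreeMonoid X) (g : FreeAlg K X) (u : FreeMonoid X) :
    (mon K a * g * mon K b).coeff (a * u * b) = g.coeff u := by
  rw [conj_eq_mapDomain]
  exact Finsupp.mapDomain_apply (conj_inj a b) g.coeff u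

variable [LinearOrder (FreeMonoid X)] [LinearOrder (MonMod X r)]

lemma conj_support (a b : FreeMonoid X) (g : FreeAlg K X) :
    (mon K a * g * mon K b).coeff.support = g.coeff.support.image (fun u => a * u * b) := by
  rw [conj_eq_mapDomain]
  exact Finsupp.mapDomain_support_of_injective (conj_inj a b) g.coeff

-- lmon basics
lemma lmon_mem {f : FreeAlg K X} (hf : f ≠ 0) : lmon f ∈ f.coeff.support := by
  rw [lmon, dif_pos (Finsupp.support_nonempty_iff.2 (by simpa using hf))]
  exact Finset.max'_mem _ _

lemma le_lmon {f : FreeAlg K X} {v : FreeMonoid X} (hv : v ∈ f.coeff.support) : v ≤ lmon f := by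
  have hf : f.coeff.support.Nonempty := ⟨v, hv⟩
  rw [lmon, dif_pos hf]
  exact Finset.le_max' _ _ hv

lemma lmon_eq_of {f : FreeAlg K X} {w : FreeMonoid X} (h1 : w ∈ f.coeff.support)
    (h2 : ∀ v ∈ f.coeff.support, v ≤ w) : lmon f = w := by
  have hf : f.coeff.support.Nonempty := ⟨w, h1⟩
  rw [lmon, dif_pos hf]
  exact le_antisymm (Finset.max'_le _ _ _ h2) (Finset.le_max' _ _ h1)

lemma lcoeff_ne_zero {f : FreeAlg K X} (hf : f ≠ 0) : lcoeff f ≠ 0 :=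
  Finsupp.mem_support_iff.1 (lmon_mem hf)

-- conj lmon
section Mono
variable {hmon' : Unit}

lemma conj_strict_mono (hmon : ∀ a b u v : FreeMonoid X, u ≤ v → a * u * b ≤ a * v * b) (a b : FreeMonoid X) {u v : FreeMonoid X} (h : u < v) :
    a * u * b < a * v * b :=
  lt_of_le_of_ne (hmon a b u v h.le) (fun he => h.ne (conj_inj a b he))

lemma lmon_conj (hmon : ∀ a b u v : FreeMonoid X, u ≤ v → a * u * b ≤ a * v * b) {g : FreeAlg K X} (hg : g ≠ 0) (a b : FreeMonoid X) :
    lmon (mon K a * g * mon K b) = a * lmon g * b := by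
  apply lmon_eq_of
  · rw [conj_support]
    exact Finset.mem_image_of_mem _ (lmon_mem hg)
  · intro v hv
    rw [conj_support] at hv
    obtain ⟨u, hu, rfl⟩ := Finset.mem_image.1 hv
    exact hmon a b _ _ (le_lmon hu)

lemma conj_coeff_eq_zero_of_lt (hmon : ∀ a b u v : FreeMonoid X, u ≤ v → a * u * b ≤ a * v * b) {g : FreeAlg K X} (a b : FreeMonoid X)
    {v : FreeMonoid X} (hv : a * lmon g * b < v) :
    (mon K a * g * mon K b).coeff v = 0 := by
  by_contra h
  have hv' : v ∈ (mon K a * g * mon K b).coeff.support := Finsupp.mem_support_iff.2 h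
  rw [conj_support] at hv'
  obtain ⟨u, hu, rfl⟩ := Finset.mem_image.1 hv'
  exact absurd (hmon a b u (lmon g) (le_lmon hu)) (not_le.2 hv)
end Mono

-- sigW basics
lemma le_sigW {α : FreeBimod K X r} {μ : MonMod X r} (h : μ ∈ α.support) :
    (μ : WithBot (MonMod X r)) ≤ sigW α := Finset.le_max h

lemma sigW_mem {α : FreeBimod K X r} {μ : MonMod X r} (h : sigW α = μ) : μ ∈ α.support :=
  Finset.mem_of_max h

lemma sigW_lt_of {α : FreeBimod K X r} {μ : MonMod X r} (h : ∀ ν ∈ α.support, ν < μ) :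
    sigW α < (μ : WithBot (MonMod X r)) := max_lt'' _ _ h

lemma sigW_smul_le (c : K) (α : FreeBimod K X r) : sigW (c • α) ≤ sigW α :=
  Finset.max_mono (Finsupp.support_smul)

lemma sigW_sub_eq {α β : FreeBimod K X r} (h : sigW β < sigW α) : sigW (α - β) = sigW α := by
  obtain ⟨μ, hμ⟩ : ∃ μ : MonMod X r, sigW α = μ := by
    cases hm : sigW α with
    | bot => rw [hm] at h; exact absurd h (by simp)
    | coe μ => exact ⟨μ, rfl⟩
  have hμs : μ ∈ α.support := sigW_mem hμ
  have hβμ : β μ = 0 := by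
    by_contra hb
    exact absurd (le_sigW (Finsupp.mem_support_iff.2 hb)) (by rw [hμ] at h; exact not_le.2 h)
  rw [hμ]
  apply max_eq''
  · rw [Finsupp.mem_support_iff, Finsupp.sub_apply, hβμ, sub_zero]
    exact Finsupp.mem_support_iff.1 hμs
  · intro ν hν
    have : ν ∈ α.support ∪ β.support := Finset.mem_of_subset Finsupp.support_sub hν
    rcases Finset.mem_union.1 this with h' | h'
    · exact_mod_cast (le_sigW h').trans_eq hμ
    · have := (le_sigW h').trans_lt (h.trans_eq hμ)
      exact_mod_cast this.le

lemma sigW_mapDomain_le (hmod : ∀ (a b : FreeMonoid X) (μ ν : MonMod X r), μ ≤ ν → act a b μ ≤ act a b ν)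
    (a b : FreeMonoid X) (γ : FreeBimod K X r) :
    sigW (Finsupp.mapDomain (act a b) γ) ≤ WithBot.map (act a b) (sigW γ) := by
  apply Finset.max_le
  intro μ hμ
  have hμ' := Finset.mem_of_subset Finsupp.mapDomain_support hμ
  obtain ⟨ν, hν, rfl⟩ := Finset.mem_image.1 hμ'
  cases hm : sigW γ with
  | bot => exact absurd (le_sigW hν) (by rw [hm]; simp)
  | coe ν₀ =>
      have : ν ≤ ν₀ := by exact_mod_cast (le_sigW hν).trans_eq hm
      show ((act a b ν : MonMod X r) : WithBot (MonMod X r)) ≤ WithBot.map (act a b) ((ν₀ : MonMod X r) : WithBot (MonMod X r))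
      rw [WithBot.map_coe]
      exact_mod_cast hmod a b ν ν₀ this

-- evalS linearity
lemma evalS_sub (F : Fin r → FreeAlg K X) (α β : FreeBimod K X r) :
    evalS F (α - β) = evalS F α - evalS F β := by
  unfold evalS
  rw [Finsupp.sum_sub_index]
  intro μ c d
  rw [sub_smul]

lemma evalS_smul (F : Fin r → FreeAlg K X) (c : K) (α : FreeBimod K X r) :
    evalS F (c • α) = c • evalS F α := by
  unfold evalS
  rw [Finsupp.sum_smul_index (fun μ => by rw [zero_smul]), Finsupp.smul_sum]
  exact Finsupp.sum_congr fun μ _ => by rw [mul_smul]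

lemma evalS_mapDomain (F : Fin r → FreeAlg K X) (a b : FreeMonoid X) (γ : FreeBimod K X r) :
    evalS F (Finsupp.mapDomain (act a b) γ) = mon K a * evalS F γ * mon K b := by
  unfold evalS
  rw [Finsupp.sum_mapDomain_index (fun μ => by rw [zero_smul])
    (fun μ c d => by rw [add_smul])]
  rw [Finsupp.sum, Finsupp.sum, Finset.mul_sum, Finset.sum_mul]
  apply Finset.sum_congr rfl
  intro μ _
  have h1 : mon K (a * μ.left) = mon K a * mon K μ.left := by
    simp [mon, map_mul]
  have h2 : mon K (μ.right * b) = mon K μ.right * mon K b := by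
    simp [mon, map_mul]
  simp only [act, h1, h2, smul_mul_assoc, mul_smul_comm, mul_assoc]
end Helpers


section Main
set_option linter.unusedSectionVars false
variable {K X : Type*} [Field K] {r : ℕ}
  [LinearOrder (FreeMonoid X)] [LinearOrder (MonMod X r)]

open Classical in
noncomputable def meas (f : FreeAlg K X) : FreeMonoid X →₀ ℕ :=
  Finsupp.mapRange (fun c : K => if c = 0 then 0 else 1) (by simp) f.coeff

open Classical in
lemma meas_apply (f : FreeAlg K X) (w : FreeMonoid X) :
    meas f w = if f.coeff w = 0 then 0 else 1 := Finsupp.mapRange_apply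

lemma measWF [WellFoundedLT (FreeMonoid X)] :
    WellFounded (Finsupp.Lex (α := FreeMonoid X) (N := ℕ) (· > ·) (· < ·)) :=
  Finsupp.Lex.wellFounded' (fun n h => Nat.not_lt_zero n h) wellFounded_lt wellFounded_lt

lemma step_decreases
    (hmon : ∀ a b u v : FreeMonoid X, u ≤ v → a * u * b ≤ a * v * b)
    {G : Set (FreeAlg K X × FreeBimod K X r)} {q q' : FreeAlg K X × FreeBimod K X r}
    (h : RegSRedStep G q q') :
    Finsupp.Lex (· > ·) (· < ·) (meas q'.1) (meas q.1) := by
  obtain ⟨g, γ, hG, hg0, a, b, hmem, hlt, rfl⟩ := h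
  set w := a * lmon g * b with hw
  set c := q.1.coeff w * (lcoeff g)⁻¹ with hc
  have hq1 : (sredResult q.1 q.2 g γ a b).1 = q.1 - c • (mon K a * g * mon K b) := rfl
  rw [Finsupp.lex_def]
  refine ⟨w, ?_, ?_⟩
  · intro v hv
    have hz : (mon K a * g * mon K b).coeff v = 0 := conj_coeff_eq_zero_of_lt hmon a b hv
    rw [hq1, meas_apply, meas_apply, MonoidAlgebra.coeff_sub, MonoidAlgebra.coeff_smul,
        Finsupp.sub_apply, Finsupp.smul_apply, hz, smul_zero, sub_zero]
  · have hfw : q.1.coeff w ≠ 0 := Finsupp.mem_support_iff.1 hmem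
    have hcg : (mon K a * g * mon K b).coeff w = lcoeff g := conj_apply a b g (lmon g)
    have hlcg : lcoeff g ≠ 0 := lcoeff_ne_zero hg0
    have hzero : q.1.coeff w - c • ((mon K a * g * mon K b).coeff w) = 0 := by
      rw [hcg, smul_eq_mul, hc]
      field_simp
      simp
    rw [hq1, meas_apply, meas_apply, MonoidAlgebra.coeff_sub, MonoidAlgebra.coeff_smul,
        Finsupp.sub_apply, Finsupp.smul_apply, hzero,
      if_pos rfl, if_neg hfw]
    exact Nat.zero_lt_one

lemma step_invariant
    (hmod : ∀ (a b : FreeMonoid X) (μ ν : MonMod X r), μ ≤ ν → act a b μ ≤ act a b ν)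
    (F : Fin r → FreeAlg K X) {G : Set (FreeAlg K X × FreeBimod K X r)}
    (hIn : InLab F G) {q q' : FreeAlg K X × FreeBimod K X r}
    (h : RegSRedStep G q q') (h1 : q.1 = evalS F q.2) :
    q'.1 = evalS F q'.2 ∧ sigW q'.2 = sigW q.2 := by
  obtain ⟨g, γ, hG, hg0, a, b, hmem, hlt, rfl⟩ := h
  set c := q.1.coeff (a * lmon g * b) * (lcoeff g)⁻¹ with hc
  have hsmall : sigW (c • Finsupp.mapDomain (act a b) γ) < sigW q.2 :=
    lt_of_le_of_lt (le_trans (sigW_smul_le c _) (sigW_mapDomain_le hmod a b γ)) hlt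
  constructor
  · show q.1 - c • (mon K a * g * mon K b) = evalS F (q.2 - c • Finsupp.mapDomain (act a b) γ)
    rw [evalS_sub, evalS_smul, evalS_mapDomain, ← (hIn (g, γ) hG).1, h1]
  · exact sigW_sub_eq hsmall

end Main


/-- **Singular criterion.** Let `p^[π] ∈ I^[Σ]` and let `G^[Σ]` be a labelled Gröbner
basis of `I^[Σ]` up to signature `s(π)`. If `G^[Σ]` contains a regular s-reduced
element `g^[γ]` with `s(γ) = s(π)`, then `p^[π]` regular s-reduces to a normal form
that is singular top s-reducible by `G^[Σ]`. -/
theorem singular_criterion {K X : Type*} [Field K] {r : ℕ}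
    [LinearOrder (FreeMonoid X)] [WellFoundedLT (FreeMonoid X)]
    [LinearOrder (MonMod X r)] [WellFoundedLT (MonMod X r)]
    (hmon : ∀ a b u v : FreeMonoid X, u ≤ v → a * u * b ≤ a * v * b)
    (hmod : ∀ (a b : FreeMonoid X) (μ ν : MonMod X r), μ ≤ ν → act a b μ ≤ act a b ν)
    (hcomp : ∀ (u v : FreeMonoid X) (i : Fin r),
      (u ≤ v ↔ (⟨u, i, 1⟩ : MonMod X r) ≤ ⟨v, i, 1⟩) ∧
      (u ≤ v ↔ (⟨1, i, u⟩ : MonMod X r) ≤ ⟨1, i, v⟩))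
    (F : Fin r → FreeAlg K X) (G : Set (FreeAlg K X × FreeBimod K X r))
    (p : FreeAlg K X) (π : FreeBimod K X r) (sπ : MonMod X r)
    (hp : p = evalS F π) (hsπ : sigW π = (sπ : WithBot (MonMod X r)))
    (hGB : LabGBUpTo F G sπ)
    (g : FreeAlg K X) (γ : FreeBimod K X r) (hgG : (g, γ) ∈ G)
    (hgred : ¬ RegSRedible G g γ)
    (hgs : sigW γ = (sπ : WithBot (MonMod X r))) :
    ∃ q : FreeAlg K X × FreeBimod K X r,
      Relation.ReflTransGen (RegSRedStep G) (p, π) q ∧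
      ¬ RegSRedible G q.1 q.2 ∧ SingTopSRed G q.1 q.2 := by
  classical
  have hg0 : g ≠ 0 := (hGB.1 (g, γ) hgG).2
  -- The set of states reachable from (p, π) by regular s-reduction
  set S : Set (FreeAlg K X × FreeBimod K X r) :=
    {q | Relation.ReflTransGen (RegSRedStep G) (p, π) q} with hS
  have hSne : S.Nonempty := ⟨(p, π), Relation.ReflTransGen.refl⟩
  -- well-founded measure
  have hwf : WellFounded (InvImage (Finsupp.Lex (· > ·) (· < ·))
      (fun q : FreeAlg K X × FreeBimod K X r => meas q.1)) :=
    InvImage.wf _ measWF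
  obtain ⟨q, hqS, hqmin⟩ := hwf.has_min S hSne
  -- q is a normal form for regular s-reduction
  have hqnf : ¬ RegSRedible G q.1 q.2 := by
    intro ⟨g', γ', hG', hg', a, b, hmem, hlt⟩
    have hstep : RegSRedStep G q (sredResult q.1 q.2 g' γ' a b) :=
      ⟨g', γ', hG', hg', a, b, hmem, hlt, rfl⟩
    exact hqmin _ (hqS.tail hstep) (step_decreases hmon hstep)
  -- invariants along the reduction
  have hinv : ∀ q' ∈ S, q'.1 = evalS F q'.2 ∧ sigW q'.2 = (sπ : WithBot (MonMod X r)) := by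
    intro q' hq'
    induction hq' with
    | refl => exact ⟨hp, hsπ⟩
    | tail h step ih =>
        obtain ⟨he, hs⟩ := step_invariant hmod F hGB.1 step ih.1
        exact ⟨he, hs.trans ih.2⟩
  obtain ⟨hqe, hqsig⟩ := hinv q hqS
  -- same-signature argument: q.1 is a nonzero scalar multiple of g
  have hcγ : γ sπ ≠ 0 := Finsupp.mem_support_iff.1 (sigW_mem hgs)
  have hcq : q.2 sπ ≠ 0 := Finsupp.mem_support_iff.1 (sigW_mem hqsig)
  set c : K := q.2 sπ * (γ sπ)⁻¹ with hcdef
  have hcne : c ≠ 0 := mul_ne_zero hcq (inv_ne_zero hcγ)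
  set β : FreeBimod K X r := q.2 - c • γ with hβ
  set h : FreeAlg K X := q.1 - c • g with hh
  have heh : h = evalS F β := by
    rw [hh, hβ, evalS_sub, evalS_smul, ← (hGB.1 (g, γ) hgG).1, hqe]
  have hβlt : sigW β < (sπ : WithBot (MonMod X r)) := by
    apply sigW_lt_of
    intro ν hν
    have hν' : ν ∈ q.2.support ∪ (c • γ).support :=
      Finset.mem_of_subset Finsupp.support_sub hν
    have hle : ν ≤ sπ := by
      rcases Finset.mem_union.1 hν' with h' | h'
      · exact_mod_cast (le_sigW h').trans_eq hqsig
      · have : ν ∈ γ.support := Finset.mem_of_subset Finsupp.support_smul h'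
        exact_mod_cast (le_sigW this).trans_eq hgs
    rcases lt_or_eq_of_le hle with h' | h'
    · exact h'
    · exfalso
      apply Finsupp.mem_support_iff.1 hν
      rw [hβ, Finsupp.sub_apply, Finsupp.smul_apply, h', smul_eq_mul, hcdef]
      field_simp
      simp
  have hzero : h = 0 := by
    by_contra hne
    obtain ⟨σ, hrtg⟩ := hGB.2 h β heh hβlt
    rcases Relation.ReflTransGen.cases_head hrtg with h1 | ⟨q', hstep, _⟩
    · exact hne (congrArg Prod.fst h1)
    · obtain ⟨g₂, γ₂, hG₂, hg₂, a, b, hmem, hsig, _⟩ := hstep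
      have hsig' : WithBot.map (act a b) (sigW γ₂) < (sπ : WithBot (MonMod X r)) :=
        lt_of_le_of_lt hsig hβlt
      have hmem' : a * lmon g₂ * b ∈ q.1.coeff.support ∪ (c • g).coeff.support := by
        apply Finset.mem_of_subset Finsupp.support_sub
        exact hmem
      rcases Finset.mem_union.1 hmem' with h' | h'
      · exact hqnf ⟨g₂, γ₂, hG₂, hg₂, a, b, h', by rw [hqsig]; exact hsig'⟩
      · have : a * lmon g₂ * b ∈ g.coeff.support := by
          rw [MonoidAlgebra.coeff_smul] at h'; exact Finset.mem_of_subset Finsupp.support_smul h'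
        exact hgred ⟨g₂, γ₂, hG₂, hg₂, a, b, this, by rw [hgs]; exact hsig'⟩
  have hq1 : q.1 = c • g := by
    have := sub_eq_zero.1 hzero
    exact this
  have hq1ne : q.1 ≠ 0 := by
    rw [hq1]
    exact smul_ne_zero hcne hg0
  have hlm : lmon q.1 = lmon g := by
    have hsupp : q.1.coeff.support = g.coeff.support := by
      rw [hq1, MonoidAlgebra.coeff_smul]; exact Finsupp.support_smul_eq hcne
    apply lmon_eq_of
    · rw [hsupp]; exact lmon_mem hg0
    · intro v hv
      rw [hsupp] at hv
      exact le_lmon hv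
  have hact : act (1 : FreeMonoid X) (1 : FreeMonoid X) = (id : MonMod X r → MonMod X r) := by
    funext μ
    cases μ
    simp [act]
  refine ⟨q, hqS, hqnf, hq1ne, g, γ, hgG, hg0, 1, 1, ?_, ?_⟩
  · rw [one_mul, mul_one, hlm]
  · rw [hact]
    have : WithBot.map (id : MonMod X r → MonMod X r) (sigW γ) = sigW γ := by
      cases sigW γ <;> rfl
    rw [this, hgs, hqsig]
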